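/- Let x* ∈ ℝ × ℝ^d and y_1*, …, y_m* ∈ ℝ × ℝ^d. Then x* is optimal for Inf_Q(P) and y* = (y_1*, …, y_m*) is dual optimal if and only if the following three conditions hold: (i) primal feasibility: ‖p̄_i − x̄*‖ ≤ p_{i0} − x_0* for all i; (ii) dual feasibility: Σ_i y_{i0}* = 1, Σ_i ȳ_i* = 0, and ‖ȳ_i*‖ ≤ y_{i0}* for all i; (iii) complementary slackness: (p_{i0} − x_0*)·y_{i0}* + ⟨p̄_i − x̄*, ȳ_i*⟩ = 0 for all i. -/

import Mathlib

/-- A point `x` is primal feasible for `Inf_Q(P)`. -/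
def PrimalFeasible {d m : ℕ} (p : Fin m → ℝ × EuclideanSpace ℝ (Fin d))
    (x : ℝ × EuclideanSpace ℝ (Fin d)) : Prop :=
  ∀ i, ‖(p i).2 - x.2‖ ≤ (p i).1 - x.1

/-- `x` is optimal for `Inf_Q(P)`. -/
def PrimalOptimal {d m : ℕ} (p : Fin m → ℝ × EuclideanSpace ℝ (Fin d))
    (x : ℝ × EuclideanSpace ℝ (Fin d)) : Prop :=
  PrimalFeasible p x ∧ ∀ x', PrimalFeasible p x' → x'.1 ≤ x.1

/-- `y` is feasible for the dual problem (D). -/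
def DualFeasible {d m : ℕ} (y : Fin m → ℝ × EuclideanSpace ℝ (Fin d)) : Prop :=
  (∑ i, (y i).1) = 1 ∧ (∑ i, (y i).2) = 0 ∧ ∀ i, ‖(y i).2‖ ≤ (y i).1

/-- The dual objective function of (D). -/
noncomputable def DualObj {d m : ℕ} (p y : Fin m → ℝ × EuclideanSpace ℝ (Fin d)) : ℝ :=
  ∑ i, ((p i).1 * (y i).1 + (inner ℝ (p i).2 (y i).2 : ℝ))

/-- `y` is optimal for the dual problem (D). -/
def DualOptimal {d m : ℕ} (p y : Fin m → ℝ × EuclideanSpace ℝ (Fin d)) : Prop :=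
  DualFeasible y ∧ ∀ y', DualFeasible y' → DualObj p y ≤ DualObj p y'



open RealInnerProductSpace Finset

section
variable {d m : ℕ}

local notation "E" => EuclideanSpace ℝ (Fin d)

lemma gap_eq (p : Fin m → ℝ × E) (x : ℝ × E) (y : Fin m → ℝ × E)
    (hy1 : ∑ i, (y i).1 = 1) (hy2 : ∑ i, (y i).2 = 0) :
    (∑ i, ((p i).1 * (y i).1 + (inner ℝ (p i).2 (y i).2 : ℝ))) - x.1 =
      ∑ i, (((p i).1 - x.1) * (y i).1 + (inner ℝ ((p i).2 - x.2) (y i).2 : ℝ)) := by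
  have key : ∀ i : Fin m, ((p i).1 - x.1) * (y i).1 + (inner ℝ ((p i).2 - x.2) (y i).2 : ℝ)
      = ((p i).1 * (y i).1 + (inner ℝ (p i).2 (y i).2 : ℝ))
        - (x.1 * (y i).1 + (inner ℝ x.2 (y i).2 : ℝ)) := by
    intro i; rw [inner_sub_left]; ring
  simp only [key]
  rw [Finset.sum_sub_distrib, Finset.sum_add_distrib, Finset.sum_add_distrib, ← Finset.mul_sum,
    ← inner_sum, hy1, hy2, inner_zero_right]
  ring

lemma term_nonneg (p : Fin m → ℝ × E) (x : ℝ × E) (y : Fin m → ℝ × E) (i : Fin m)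
    (hx : ‖(p i).2 - x.2‖ ≤ (p i).1 - x.1) (hy : ‖(y i).2‖ ≤ (y i).1) :
    0 ≤ ((p i).1 - x.1) * (y i).1 + (inner ℝ ((p i).2 - x.2) (y i).2 : ℝ) := by
  have h1 := abs_real_inner_le_norm ((p i).2 - x.2) ((y i).2)
  have h2 : ‖(p i).2 - x.2‖ * ‖(y i).2‖ ≤ ((p i).1 - x.1) * (y i).1 :=
    mul_le_mul hx hy (norm_nonneg _) (le_trans (norm_nonneg _) hx)
  have h3 := (abs_le.mp h1).1
  linarith


set_option maxHeartbeats 1000000 in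
lemma exists_cert (hm : 1 ≤ m) (p : Fin m → ℝ × E) (x : ℝ × E)
    (hxf : ∀ i, ‖(p i).2 - x.2‖ ≤ (p i).1 - x.1)
    (hxo : ∀ x' : ℝ × E, (∀ i, ‖(p i).2 - x'.2‖ ≤ (p i).1 - x'.1) → x'.1 ≤ x.1) :
    ∃ y : Fin m → ℝ × E, ((∑ i, (y i).1) = 1 ∧ (∑ i, (y i).2) = 0 ∧ ∀ i, ‖(y i).2‖ ≤ (y i).1)
      ∧ ∀ i, ((p i).1 - x.1) * (y i).1 + (inner ℝ ((p i).2 - x.2) (y i).2 : ℝ) = 0 := by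
  classical
  have hne : (Finset.univ : Finset (Fin m)).Nonempty := ⟨⟨0, hm⟩, Finset.mem_univ _⟩
  set r : Fin m → ℝ := fun i => (p i).1 - x.1 with hrdef
  set a : Fin m → E := fun i => (p i).2 - x.2 with hadef
  have hra : ∀ i, ‖a i‖ ≤ r i := hxf
  set A : Finset (Fin m) := Finset.univ.filter (fun i => ‖a i‖ = r i) with hAdef
  have hAmem : ∀ i, i ∈ A ↔ ‖a i‖ = r i := by intro i; simp [hAdef]
  -- the active set is nonempty
  have hA : A.Nonempty := by
    by_contra hAe
    have hlt : ∀ i, ‖a i‖ < r i := by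
      intro i
      refine lt_of_le_of_ne (hra i) fun h => hAe ⟨i, (hAmem i).mpr h⟩
    set δ : ℝ := Finset.univ.inf' hne (fun i => r i - ‖a i‖) with hδdef
    have hδ : 0 < δ := (Finset.lt_inf'_iff hne).mpr (fun i _ => sub_pos.mpr (hlt i))
    have hfeas : ∀ i, ‖(p i).2 - ((x.1 + δ, x.2) : ℝ × E).2‖ ≤ (p i).1 - ((x.1 + δ, x.2) : ℝ × E).1 := by
      intro i
      have h1 : δ ≤ r i - ‖a i‖ := Finset.inf'_le _ (Finset.mem_univ i)
      show ‖a i‖ ≤ (p i).1 - (x.1 + δ)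
      have : (p i).1 - (x.1 + δ) = r i - δ := by rw [hrdef]; ring
      rw [this]; linarith
    have := hxo _ hfeas
    simp only at this
    linarith
  by_cases hc : ∃ i ∈ A, r i = 0
  · obtain ⟨i₀, hi₀A, hi₀⟩ := hc
    refine ⟨fun j => (if j = i₀ then 1 else 0, 0), ⟨?_, ?_, ?_⟩, ?_⟩
    · simp
    · simp
    · intro i; by_cases h : i = i₀ <;> simp [h]
    · intro i
      by_cases h : i = i₀
      · subst h
        simp only [if_true, mul_one, inner_zero_right, add_zero]
        exact hi₀
      · simp [h]
  · push_neg at hc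
    have hrpos : ∀ i ∈ A, 0 < r i := fun i hi =>
      lt_of_le_of_ne (le_trans (norm_nonneg _) (hra i)) (Ne.symm (hc i hi))
    set u : Fin m → E := fun i => (r i)⁻¹ • a i with hudef
    set T : Finset E := A.image u with hTdef
    have hunorm : ∀ i ∈ A, ‖u i‖ = 1 := by
      intro i hi
      show ‖(r i)⁻¹ • a i‖ = 1
      rw [norm_smul, Real.norm_eq_abs, abs_of_pos (inv_pos.mpr (hrpos i hi)),
        (hAmem i).mp hi, inv_mul_cancel₀ (hrpos i hi).ne']
    have hinner_self : ∀ i ∈ A, (inner ℝ (a i) (u i) : ℝ) = r i := by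
      intro i hi
      show (inner ℝ (a i) ((r i)⁻¹ • a i) : ℝ) = r i
      rw [real_inner_smul_right, real_inner_self_eq_norm_sq, (hAmem i).mp hi, pow_two,
        ← mul_assoc, inv_mul_cancel₀ (hrpos i hi).ne', one_mul]
    have h0 : (0 : E) ∈ convexHull ℝ (↑T : Set E) := by
      by_contra h0
      obtain ⟨f, c, hfc, hcb⟩ := geometric_hahn_banach_point_closed
        (convex_convexHull ℝ _) (T.finite_toSet.isClosed_convexHull (𝕜 := ℝ)) h0
      set v : E := (InnerProductSpace.toDual ℝ E).symm f with hvdef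
      have hv : ∀ z : E, (inner ℝ v z : ℝ) = f z := fun z => InnerProductSpace.toDual_symm_apply
      have hc0 : 0 < c := by simpa using hfc
      have hkey : ∀ i ∈ A, r i * c ≤ (inner ℝ v (a i) : ℝ) := by
        intro i hi
        have h1 : c < f (u i) :=
          hcb _ (subset_convexHull ℝ _ (by exact_mod_cast Finset.mem_image_of_mem u hi))
        have h2 : (inner ℝ v (u i) : ℝ) = (r i)⁻¹ * (inner ℝ v (a i) : ℝ) := by
          rw [hudef]; exact real_inner_smul_right _ _ _
        have h3 : c < (r i)⁻¹ * (inner ℝ v (a i) : ℝ) := by rw [← h2, hv]; exact h1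
        have hrp := hrpos i hi
        have h4 := mul_lt_mul_of_pos_left h3 hrp
        rw [← mul_assoc, mul_inv_cancel₀ (ne_of_gt hrp), one_mul] at h4
        exact h4.le
      have hvne : v ≠ 0 := by
        obtain ⟨i₀, hi₀⟩ := hA
        intro h
        have h5 := hkey i₀ hi₀
        rw [h, inner_zero_left] at h5
        nlinarith [hrpos i₀ hi₀]
      have hvpos : 0 < ‖v‖ := norm_pos_iff.mpr hvne
      set b : Fin m → ℝ := fun i => if i ∈ A then min (r i * c / ‖v‖ ^ 2) (2 * r i / c)
        else (r i - ‖a i‖) / (‖v‖ + c / 2) with hbdef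
      have hbpos : ∀ i, 0 < b i := by
        intro i
        rw [hbdef]
        by_cases hi : i ∈ A
        · simp only [hi, if_true, lt_min_iff]
          constructor
          · exact div_pos (mul_pos (hrpos i hi) hc0) (pow_pos hvpos 2)
          · exact div_pos (by linarith [hrpos i hi]) hc0
        · simp only [hi, if_false]
          have hlt : ‖a i‖ < r i :=
            lt_of_le_of_ne (hra i) (fun h => hi ((hAmem i).mpr h))
          exact div_pos (sub_pos.mpr hlt) (by positivity)
      set t : ℝ := Finset.univ.inf' hne b with htdef
      have ht : 0 < t := (Finset.lt_inf'_iff hne).mpr fun i _ => hbpos i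
      have htb : ∀ i, t ≤ b i := fun i => Finset.inf'_le _ (Finset.mem_univ i)
      set δ : ℝ := t * c / 2 with hδdef
      have hδ : 0 < δ := by rw [hδdef]; positivity
      have hfeas : ∀ i, ‖(p i).2 - ((x.1 + δ, x.2 + t • v) : ℝ × E).2‖
          ≤ (p i).1 - ((x.1 + δ, x.2 + t • v) : ℝ × E).1 := by
        intro i
        show ‖(p i).2 - (x.2 + t • v)‖ ≤ (p i).1 - (x.1 + δ)
        have hsub : (p i).2 - (x.2 + t • v) = a i - t • v := by rw [hadef, sub_add_eq_sub_sub]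
        have hrδ : (p i).1 - (x.1 + δ) = r i - δ := by rw [hrdef]; ring
        rw [hsub, hrδ]
        by_cases hi : i ∈ A
        · have hai : ‖a i‖ = r i := (hAmem i).mp hi
          have hrp := hrpos i hi
          have ht1 : t ≤ r i * c / ‖v‖ ^ 2 := by
            refine le_trans (htb i) ?_
            rw [hbdef]; simp only [hi, if_true]; exact min_le_left _ _
          have ht2 : t ≤ 2 * r i / c := by
            refine le_trans (htb i) ?_
            rw [hbdef]; simp only [hi, if_true]; exact min_le_right _ _
          have hδr : δ ≤ r i := by
            have h6 : t * c ≤ 2 * r i := (le_div_iff₀ hc0).mp ht2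
            rw [hδdef]; linarith
          have hkey' := hkey i hi
          have hsq : ‖a i - t • v‖ ^ 2 ≤ (r i - δ) ^ 2 := by
            have e1 : ‖a i - t • v‖ ^ 2
                = ‖a i‖ ^ 2 - 2 * (t * (inner ℝ (a i) v : ℝ)) + t ^ 2 * ‖v‖ ^ 2 := by
              rw [norm_sub_sq_real, real_inner_smul_right, norm_smul, Real.norm_eq_abs,
                mul_pow, sq_abs]
            have e2 : (inner ℝ (a i) v : ℝ) = (inner ℝ v (a i) : ℝ) := real_inner_comm _ _
            have h7 : t * ‖v‖ ^ 2 ≤ r i * c := (le_div_iff₀ (pow_pos hvpos 2)).mp ht1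
            have h8 : t ^ 2 * ‖v‖ ^ 2 ≤ t * (r i * c) := by nlinarith [ht.le]
            rw [e1, e2]
            have h9 : r i * c ≤ (inner ℝ v (a i) : ℝ) := hkey'
            have hδval : δ = t * c / 2 := hδdef
            nlinarith [hai, ht.le, sq_nonneg δ]
          have hrd : 0 ≤ r i - δ := sub_nonneg.mpr hδr
          have h5 := Real.sqrt_le_sqrt hsq
          rwa [Real.sqrt_sq (norm_nonneg _), Real.sqrt_sq hrd] at h5
        · have hlt : ‖a i‖ < r i :=
            lt_of_le_of_ne (hra i) (fun h => hi ((hAmem i).mpr h))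
          have ht3 : t ≤ (r i - ‖a i‖) / (‖v‖ + c / 2) := by
            refine le_trans (htb i) ?_
            rw [hbdef]; simp only [hi, if_false]; exact le_refl _
          have h6 : t * (‖v‖ + c / 2) ≤ r i - ‖a i‖ := (le_div_iff₀ (by positivity)).mp ht3
          have h7 : t * (‖v‖ + c / 2) = t * ‖v‖ + t * c / 2 := by ring
          calc ‖a i - t • v‖ ≤ ‖a i‖ + ‖t • v‖ := norm_sub_le _ _
            _ = ‖a i‖ + t * ‖v‖ := by rw [norm_smul, Real.norm_eq_abs, abs_of_pos ht]
            _ ≤ r i - δ := by rw [hδdef]; linarith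
      have hcon := hxo _ hfeas
      simp only at hcon
      linarith
    rw [Finset.mem_convexHull] at h0
    obtain ⟨w, hw0, hw1, hwc⟩ := h0
    have hcm : ∑ e ∈ T, w e • e = 0 := by
      rw [Finset.centerMass, hw1] at hwc
      simpa using hwc
    set ι : E → Fin m := fun e => if h : ∃ i ∈ A, u i = e then h.choose else ⟨0, hm⟩ with hιdef
    have hι : ∀ e ∈ T, ι e ∈ A ∧ u (ι e) = e := by
      intro e he
      have h : ∃ i ∈ A, u i = e := Finset.mem_image.mp he
      rw [hιdef]
      simp only [dif_pos h]
      exact ⟨h.choose_spec.1, h.choose_spec.2⟩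
    set lam : Fin m → ℝ := fun j => ∑ e ∈ T, if ι e = j then w e else 0 with hlamdef
    have hlam0 : ∀ j, 0 ≤ lam j := by
      intro j
      refine Finset.sum_nonneg fun e he => ?_
      split
      · exact hw0 e he
      · exact le_refl 0
    have hlamsum : ∑ j, lam j = 1 := by
      rw [hlamdef]
      rw [Finset.sum_comm]
      simp only [Finset.sum_ite_eq, Finset.mem_univ, if_true]
      exact hw1
    have hmem : ∀ j, lam j ≠ 0 → ∃ e ∈ T, ι e = j := by
      intro j hj
      by_contra h
      push_neg at h
      exact hj (Finset.sum_eq_zero fun e he => if_neg (h e he))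
    have hmemA : ∀ j, lam j ≠ 0 → j ∈ A := by
      intro j hj
      obtain ⟨e, he, hej⟩ := hmem j hj
      exact hej ▸ (hι e he).1
    have hsum2 : ∑ j, lam j • u j = 0 := by
      calc ∑ j, lam j • u j
          = ∑ j, ∑ e ∈ T, (if ι e = j then w e • u j else 0) := by
            refine Finset.sum_congr rfl fun j _ => ?_
            rw [hlamdef, Finset.sum_smul]
            refine Finset.sum_congr rfl fun e _ => ?_
            split <;> simp
        _ = ∑ e ∈ T, ∑ j, (if ι e = j then w e • u j else 0) := Finset.sum_comm
        _ = ∑ e ∈ T, w e • u (ι e) := by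
            simp only [Finset.sum_ite_eq, Finset.mem_univ, if_true]
        _ = ∑ e ∈ T, w e • e := Finset.sum_congr rfl fun e he => by rw [(hι e he).2]
        _ = 0 := hcm
    refine ⟨fun j => (lam j, -lam j • u j), ⟨?_, ?_, ?_⟩, ?_⟩
    · exact hlamsum
    · show ∑ j, -lam j • u j = 0
      simp only [neg_smul]
      rw [Finset.sum_neg_distrib, hsum2, neg_zero]
    · intro i
      show ‖-lam i • u i‖ ≤ lam i
      rw [norm_smul, Real.norm_eq_abs, abs_neg, abs_of_nonneg (hlam0 i)]
      rcases eq_or_ne (lam i) 0 with h | h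
      · simp [h]
      · rw [hunorm i (hmemA i h), mul_one]
    · intro i
      show r i * lam i + (inner ℝ (a i) (-lam i • u i) : ℝ) = 0
      rcases eq_or_ne (lam i) 0 with h | h
      · simp [h]
      · rw [real_inner_smul_right, hinner_self i (hmemA i h)]
        ring

end

/-- Optimality conditions: `(x, y)` is a primal-dual optimal pair iff primal feasibility,
dual feasibility and complementary slackness hold. -/
theorem stmt_4 (d m : ℕ) (hd : 1 ≤ d) (hm : 1 ≤ m)
    (p : Fin m → ℝ × EuclideanSpace ℝ (Fin d))
    (x : ℝ × EuclideanSpace ℝ (Fin d))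
    (y : Fin m → ℝ × EuclideanSpace ℝ (Fin d)) :
    (PrimalOptimal p x ∧ DualOptimal p y) ↔
      (PrimalFeasible p x ∧ DualFeasible y ∧
        ∀ i, ((p i).1 - x.1) * (y i).1 + (inner ℝ ((p i).2 - x.2) (y i).2 : ℝ) = 0) := by
  constructor
  · rintro ⟨hxo, hyo⟩
    obtain ⟨y', hy'f, hy'cs⟩ := exists_cert hm p x hxo.1 hxo.2
    have hy'obj : DualObj p y' = x.1 := by
      have hgap := gap_eq p x y' hy'f.1 hy'f.2.1
      rw [Finset.sum_eq_zero (fun i _ => hy'cs i)] at hgap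
      have : DualObj p y' - x.1 = 0 := hgap
      linarith
    have hle : DualObj p y ≤ x.1 := hy'obj ▸ hyo.2 y' hy'f
    have hgap := gap_eq p x y hyo.1.1 hyo.1.2.1
    have hnn : ∀ i ∈ Finset.univ, (0:ℝ) ≤
        ((p i).1 - x.1) * (y i).1 + (inner ℝ ((p i).2 - x.2) (y i).2 : ℝ) :=
      fun i _ => term_nonneg p x y i (hxo.1 i) (hyo.1.2.2 i)
    have hsum0 : ∑ i, (((p i).1 - x.1) * (y i).1 + (inner ℝ ((p i).2 - x.2) (y i).2 : ℝ)) = 0 := by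
      have h1 : (0:ℝ) ≤ ∑ i, (((p i).1 - x.1) * (y i).1 + (inner ℝ ((p i).2 - x.2) (y i).2 : ℝ)) :=
        Finset.sum_nonneg hnn
      have h2 : DualObj p y - x.1 ≤ 0 := by linarith
      linarith [hgap ▸ h2]
    exact ⟨hxo.1, hyo.1, fun i =>
      (Finset.sum_eq_zero_iff_of_nonneg hnn).mp hsum0 i (Finset.mem_univ i)⟩
  · rintro ⟨hpf, hdf, hcs⟩
    have hobj : DualObj p y = x.1 := by
      have hgap := gap_eq p x y hdf.1 hdf.2.1
      rw [Finset.sum_eq_zero (fun i _ => hcs i)] at hgap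
      have : DualObj p y - x.1 = 0 := hgap
      linarith
    constructor
    · refine ⟨hpf, fun x' hx' => ?_⟩
      have hgap' := gap_eq p x' y hdf.1 hdf.2.1
      have h1 : (0:ℝ) ≤ DualObj p y - x'.1 := by
        rw [show (DualObj p y : ℝ) = ∑ i, ((p i).1 * (y i).1 + (inner ℝ (p i).2 (y i).2 : ℝ))
          from rfl, hgap']
        exact Finset.sum_nonneg fun i _ => term_nonneg p x' y i (hx' i) (hdf.2.2 i)
      linarith
    · refine ⟨hdf, fun y' hy' => ?_⟩
      have hgap' := gap_eq p x y' hy'.1 hy'.2.1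
      have h1 : (0:ℝ) ≤ DualObj p y' - x.1 := by
        rw [show (DualObj p y' : ℝ) = ∑ i, ((p i).1 * (y' i).1 + (inner ℝ (p i).2 (y' i).2 : ℝ))
          from rfl, hgap']
        exact Finset.sum_nonneg fun i _ => term_nonneg p x y' i (hpf i) (hy'.2.2 i)
      linarith
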